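/- Let J be a nonempty proper subset of {0,…,d}. If z ∈ A_J and ρ'(z)(δ_0) lies in span_K{δ_μ : J ⊆ J(μ) and J ≠ J(μ)}, then ρ'(z)(δ_0) = 0. -/

import Mathlib

open UniversalEnvelopingAlgebra

attribute [local instance 100] LieRing.ofAssociativeRing LieAlgebra.ofAssociativeAlgebra

/-- For J a nonempty proper subset of {0,…,d}, if z ∈ A_J and
ρ'(z)(δ_0) lies in span_K{δ_μ : J ⊊ J(μ)}, then ρ'(z)(δ_0) = 0
(i.e. U(𝔫_J⁺) ∩ 𝔟_J^> = U(𝔫_J⁺) ∩ 𝔟). -/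
theorem stmt_12 (K : Type) [Field K] [CharZero K] (d : ℕ) (hd : 1 ≤ d)
    (ρ' : UniversalEnvelopingAlgebra K (Matrix (Fin (d+1)) (Fin (d+1)) K) →ₐ[K]
        Module.End K ((Fin (d+1) → ℤ) →₀ K))
    (hρ'₁ : ∀ (i j : Fin (d+1)), i ≠ j → ∀ ν : Fin (d+1) → ℤ,
      ρ' (ι K (Matrix.single i j (1:K))) (Finsupp.single ν (1:K)) =
        (ν j - 1) • Finsupp.single (ν + Pi.single i 1 - Pi.single j 1) (1:K))
    (hρ'₂ : ∀ (k : Fin (d+1)) (ν : Fin (d+1) → ℤ),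
      ρ' (ι K (Matrix.single k k (1:K))) (Finsupp.single ν (1:K)) =
        ν k • Finsupp.single ν (1:K))
    (J : Set (Fin (d+1))) (hJ : J.Nonempty) (hJ' : J ≠ Set.univ)
    (AJ : Subalgebra K (UniversalEnvelopingAlgebra K (Matrix (Fin (d+1)) (Fin (d+1)) K)))
    (hAJ : AJ = Algebra.adjoin K
      {w | ∃ i ∈ J, ∃ j ∉ J, w = ι K (Matrix.single i j (1:K))})
    (z : UniversalEnvelopingAlgebra K (Matrix (Fin (d+1)) (Fin (d+1)) K))
    (hz : z ∈ AJ)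
    (hzδ : ρ' z (Finsupp.single (0 : Fin (d+1) → ℤ) (1:K)) ∈
      Submodule.span K {w : (Fin (d+1) → ℤ) →₀ K | ∃ μ : Fin (d+1) → ℤ,
        J ⊆ {k | 0 < μ k} ∧ J ≠ {k | 0 < μ k} ∧ w = Finsupp.single μ (1:K)}) :
    ρ' z (Finsupp.single (0 : Fin (d+1) → ℤ) (1:K)) = 0 := by
  classical
  set v : (Fin (d+1) → ℤ) → ((Fin (d+1) → ℤ) →₀ K) := fun μ => Finsupp.single μ 1 with hv
  set A : Set (Fin (d+1) → ℤ) := {μ | {k | 0 < μ k} ⊆ J} with hA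
  set B : Set (Fin (d+1) → ℤ) := {μ | J ⊆ {k | 0 < μ k} ∧ J ≠ {k | 0 < μ k}} with hB
  -- Step 1: ρ' z δ₀ ∈ span (v '' A)
  have hMA : ρ' z (Finsupp.single (0 : Fin (d+1) → ℤ) (1:K)) ∈
      Submodule.span K (v '' A) := by
    have key : ∀ x ∈ AJ, ∀ w ∈ Submodule.span K (v '' A),
        ρ' x w ∈ Submodule.span K (v '' A) := by
      rw [hAJ]
      intro x hx
      induction hx using Algebra.adjoin_induction with
      | mem g hg =>
        obtain ⟨i, hi, j, hj, rfl⟩ := hg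
        have hij : i ≠ j := fun h => hj (h ▸ hi)
        intro w hw
        induction hw using Submodule.span_induction with
        | mem w hw =>
          obtain ⟨μ, hμ, rfl⟩ := hw
          rw [hv]
          rw [hρ'₁ i j hij μ]
          refine zsmul_mem (Submodule.subset_span ?_) _
          refine ⟨μ + Pi.single i 1 - Pi.single j 1, ?_, rfl⟩
          intro k hk
          simp only [Set.mem_setOf_eq, Pi.sub_apply, Pi.add_apply] at hk
          by_cases hki : k = i
          · exact hki ▸ hi
          · by_cases hkj : k = j
            · exfalso
              subst hkj
              simp [Pi.single_apply, hij.symm] at hk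
              have : (0:ℤ) < μ k := by omega
              exact hj (hμ this)
            · simp [Pi.single_apply, hki, hkj] at hk
              exact hμ hk
        | zero => simpa using Submodule.zero_mem _
        | add a b _ _ ha hb => rw [map_add]; exact Submodule.add_mem _ ha hb
        | smul c a _ ha => rw [map_smul]; exact Submodule.smul_mem _ c ha
      | algebraMap r =>
        intro w hw
        rw [AlgHom.commutes, Module.algebraMap_end_apply]
        exact Submodule.smul_mem _ r hw
      | add a b ha hb iha ihb =>
        intro w hw
        rw [map_add, LinearMap.add_apply]
        exact Submodule.add_mem _ (iha w hw) (ihb w hw)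
      | mul a b ha hb iha ihb =>
        intro w hw
        rw [map_mul, Module.End.mul_apply]
        exact iha _ (ihb w hw)
    refine key z hz _ (Submodule.subset_span ⟨0, ?_, rfl⟩)
    intro k hk
    simp at hk
  -- Step 2: hzδ gives membership in span (v '' B)
  have hMB : ρ' z (Finsupp.single (0 : Fin (d+1) → ℤ) (1:K)) ∈
      Submodule.span K (v '' B) := by
    convert hzδ using 2
    ext w
    constructor
    · rintro ⟨μ, hμ, rfl⟩
      exact ⟨μ, hμ.1, hμ.2, rfl⟩
    · rintro ⟨μ, h1, h2, rfl⟩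
      exact ⟨μ, ⟨h1, h2⟩, rfl⟩
  -- Step 3: the spans are disjoint
  have hdisj : Disjoint A B := by
    rw [Set.disjoint_left]
    rintro μ hμA ⟨h1, h2⟩
    exact h2 (le_antisymm h1 hμA)
  have hli : LinearIndependent K v := by
    have := (Finsupp.basisSingleOne (R := K) (ι := Fin (d+1) → ℤ)).linearIndependent
    convert this using 1
    funext μ
    simp [hv]
  have := hli.disjoint_span_image hdisj
  exact (Submodule.disjoint_def.mp this) _ hMA hMB
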